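/- Let (a_n)_{n≥1} be a sequence of positive real numbers such that the series ∑_{n=1}^∞ a_n diverges. Then for every natural number m, the series ∑_{n=1}^∞ a_n^{1 + m/n} also diverges. -/

import Mathlib

/-- If `(a_n)_{n ≥ 1}` is a sequence of positive reals whose series diverges,
then for every natural number `m` the series `∑_{n ≥ 1} a_n^{1 + m/n}` also
diverges.  (The index `n ≥ 1` is encoded by evaluating at `n + 1`.) -/
theorem summable_rpow_shifted_of_not_summable (a : ℕ → ℝ)
    (hpos : ∀ n : ℕ, 1 ≤ n → 0 < a n)
    (hdiv : ¬ Summable (fun n : ℕ => a (n + 1))) (m : ℕ) :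
    ¬ Summable (fun n : ℕ => a (n + 1) ^ ((1 : ℝ) + (m : ℝ) / ((n : ℝ) + 1))) := by
  rcases Nat.eq_zero_or_pos m with hm | hm
  · subst hm
    simpa using hdiv
  intro hs
  apply hdiv
  -- geometric ratio
  set r : ℝ := (1/2 : ℝ) ^ ((1 : ℝ) / (m : ℝ)) with hr
  have hr0 : 0 ≤ r := Real.rpow_nonneg (by norm_num) _
  have hr1 : r < 1 := by
    apply Real.rpow_lt_one (by norm_num) (by norm_num)
    positivity
  have hgeo : Summable (fun n : ℕ => r ^ (n + 1)) := by
    have := summable_geometric_of_lt_one hr0 hr1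
    simpa [pow_succ] using this.mul_right r
  have hsum : Summable (fun n : ℕ =>
      2 * a (n + 1) ^ ((1 : ℝ) + (m : ℝ) / ((n : ℝ) + 1)) + r ^ (n + 1)) :=
    (hs.mul_left 2).add hgeo
  apply hsum.of_nonneg_of_le
  · intro n
    exact (hpos (n + 1) (Nat.le_add_left 1 n)).le
  · intro n
    have hx : 0 < a (n + 1) := hpos (n + 1) (Nat.le_add_left 1 n)
    have hm' : (0 : ℝ) < m := by exact_mod_cast hm
    have hn1 : (0 : ℝ) < (n : ℝ) + 1 := by positivity
    have hc : r ^ (n + 1) = (1/2 : ℝ) ^ (((n : ℝ) + 1) / (m : ℝ)) := by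
      rw [hr, ← Real.rpow_natCast ((1/2 : ℝ) ^ ((1:ℝ)/(m:ℝ))) (n+1),
        ← Real.rpow_mul (by norm_num)]
      push_cast
      ring_nf
    set e : ℝ := (m : ℝ) / ((n : ℝ) + 1) with he
    have he0 : 0 < e := by positivity
    by_cases hcase : a (n + 1) ≤ r ^ (n + 1)
    · have : (0:ℝ) ≤ 2 * a (n + 1) ^ ((1 : ℝ) + e) := by positivity
      linarith
    · push_neg at hcase
      have hce : (r ^ (n + 1)) ^ e ≤ a (n + 1) ^ e :=
        Real.rpow_le_rpow (by positivity) hcase.le he0.le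
      have hval : (r ^ (n + 1)) ^ e = 1 / 2 := by
        rw [hc, ← Real.rpow_mul (by norm_num : (0:ℝ) ≤ 1/2)]
        have : ((n : ℝ) + 1) / (m : ℝ) * e = 1 := by
          rw [he]; field_simp
        rw [this, Real.rpow_one]
      have hsplit : a (n + 1) ^ ((1 : ℝ) + e) = a (n + 1) * a (n + 1) ^ e := by
        rw [Real.rpow_add hx, Real.rpow_one]
      have h2 : (1/2 : ℝ) ≤ a (n + 1) ^ e := by rw [← hval]; exact hce
      have hrn : (0:ℝ) ≤ r ^ (n+1) := by positivity
      nlinarith [hx.le]
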